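/- arXiv:0810.0677 — 6 statements merged into one kernel-verified Lean document; each statement's English description precedes it below -/
import Mathlib

section
/- For every integer q ≥ 3 and β > 0, the second derivative of ψ(X) = log((q-1+e^{2β} e^X)/(q-2+e^{2β}+e^X)) at X = 0 is strictly positive. -/
/-- For q ≥ 3 and β > 0 the second derivative of
ψ(X) = log((q-1+e^{2β} e^X)/(q-2+e^{2β}+e^X)) at X = 0 is strictly positive. -/
theorem stmt2 (q : ℕ) (hq : 3 ≤ q) (β : ℝ) (hβ : 0 < β) :
    0 < deriv (deriv (fun X : ℝ =>
        Real.log (((q : ℝ) - 1 + Real.exp (2 * β) * Real.exp X) /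
          ((q : ℝ) - 2 + Real.exp (2 * β) + Real.exp X)))) 0 := by
  set a : ℝ := (q : ℝ) - 1 with ha
  set b : ℝ := Real.exp (2 * β) with hb
  set c : ℝ := (q : ℝ) - 2 + b with hc
  have hq3 : (3 : ℝ) ≤ (q : ℝ) := by exact_mod_cast hq
  have hapos : 2 ≤ a := by simp [ha]; linarith
  have hbpos : 0 < b := Real.exp_pos _
  have hb1 : 1 < b := by
    rw [hb]
    have : (0:ℝ) < 2 * β := by linarith
    calc (1:ℝ) = Real.exp 0 := by simp
      _ < Real.exp (2 * β) := Real.exp_lt_exp.2 this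
  have hcpos : 1 ≤ c := by simp only [hc]; linarith
  have hnum : ∀ X : ℝ, 0 < a + b * Real.exp X := fun X => by
    have := Real.exp_pos X; nlinarith
  have hden : ∀ X : ℝ, 0 < c + Real.exp X := fun X => by
    have := Real.exp_pos X; nlinarith
  have hfun : (fun X : ℝ =>
        Real.log (((q : ℝ) - 1 + Real.exp (2 * β) * Real.exp X) /
          ((q : ℝ) - 2 + Real.exp (2 * β) + Real.exp X)))
      = fun X : ℝ => Real.log (a + b * Real.exp X) - Real.log (c + Real.exp X) := by
    funext X
    rw [Real.log_div (ne_of_gt (hnum X)) (ne_of_gt (hden X))]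
  have hd1 : ∀ X : ℝ, HasDerivAt (fun X : ℝ => Real.log (a + b * Real.exp X))
      (b * Real.exp X / (a + b * Real.exp X)) X := fun X => by
    have h : HasDerivAt (fun X : ℝ => a + b * Real.exp X) (b * Real.exp X) X :=
      ((Real.hasDerivAt_exp X).const_mul b).const_add a
    exact h.log (ne_of_gt (hnum X))
  have hd2 : ∀ X : ℝ, HasDerivAt (fun X : ℝ => Real.log (c + Real.exp X))
      (Real.exp X / (c + Real.exp X)) X := fun X => by
    have h : HasDerivAt (fun X : ℝ => c + Real.exp X) (Real.exp X) X :=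
      (Real.hasDerivAt_exp X).const_add c
    exact h.log (ne_of_gt (hden X))
  have hderiv1 : deriv (fun X : ℝ =>
        Real.log (((q : ℝ) - 1 + Real.exp (2 * β) * Real.exp X) /
          ((q : ℝ) - 2 + Real.exp (2 * β) + Real.exp X)))
      = fun X : ℝ => b * Real.exp X / (a + b * Real.exp X)
          - Real.exp X / (c + Real.exp X) := by
    rw [hfun]
    funext X
    exact ((hd1 X).sub (hd2 X)).deriv
  rw [hderiv1]
  have h1 : HasDerivAt (fun X : ℝ => b * Real.exp X / (a + b * Real.exp X))
      ((b * Real.exp 0 * (a + b * Real.exp 0) - b * Real.exp 0 * (b * Real.exp 0))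
        / (a + b * Real.exp 0) ^ 2) 0 := by
    have hu : HasDerivAt (fun X : ℝ => b * Real.exp X) (b * Real.exp 0) 0 :=
      (Real.hasDerivAt_exp 0).const_mul b
    have hv : HasDerivAt (fun X : ℝ => a + b * Real.exp X) (b * Real.exp 0) 0 :=
      ((Real.hasDerivAt_exp 0).const_mul b).const_add a
    exact hu.div hv (ne_of_gt (hnum 0))
  have h2 : HasDerivAt (fun X : ℝ => Real.exp X / (c + Real.exp X))
      ((Real.exp 0 * (c + Real.exp 0) - Real.exp 0 * Real.exp 0)
        / (c + Real.exp 0) ^ 2) 0 := by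
    have hu : HasDerivAt (fun X : ℝ => Real.exp X) (Real.exp 0) 0 := Real.hasDerivAt_exp 0
    have hv : HasDerivAt (fun X : ℝ => c + Real.exp X) (Real.exp 0) 0 :=
      (Real.hasDerivAt_exp 0).const_add c
    exact hu.div hv (ne_of_gt (hden 0))
  rw [(show HasDerivAt (fun X : ℝ => b * Real.exp X / (a + b * Real.exp X) - Real.exp X / (c + Real.exp X)) _ 0 from h1.sub h2).deriv]
  simp only [Real.exp_zero, mul_one]
  have hab : a + b = c + 1 := by simp only [hc]; ring
  have e1 : (b * (a + b) - b * b) / (a + b) ^ 2 = (a * b) / (c + 1) ^ 2 := by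
    rw [hab]; ring
  have e2 : (1 * (c + 1) - 1) / (c + 1) ^ 2 = c / (c + 1) ^ 2 := by ring
  rw [e1, e2, div_sub_div_same]
  apply div_pos
  · nlinarith
  · positivity
end

section
/- Let q ≥ 2, β > 0, u(p) = log(1 + p(e^{2β} − 1)), and h(p₁,…,p_q) = q p₂ (u(p₂) − u(p₁)). Then the symmetrization satisfies (R h)(p₁,…,p_q) = (1/(q−1)) Σ_{i=1}^q (q p_i − 1) u(p_i) for every probability vector (p₁,…,p_q) with Σ p_i = 1. -/
open scoped BigOperators

open Equiv in
lemma perm_pair_sum (n : ℕ) (F : Fin (n + 2) → Fin (n + 2) → ℝ) :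
    ∑ π : Equiv.Perm (Fin (n + 2)), F (π 0) (π 1)
      = (n.factorial : ℝ) * ∑ a, ((∑ j, F a j) - F a a) := by
  rw [← Equiv.sum_comp Equiv.Perm.decomposeFin.symm
    (fun π : Equiv.Perm (Fin (n + 2)) => F (π 0) (π 1)), Fintype.sum_prod_type]
  have step1 : ∀ a : Fin (n + 2),
      ∑ e : Equiv.Perm (Fin (n + 1)),
        F (Equiv.Perm.decomposeFin.symm (a, e) 0) (Equiv.Perm.decomposeFin.symm (a, e) 1)
      = (n.factorial : ℝ) * ∑ b : Fin (n + 1), F a (Equiv.swap 0 a b.succ) := by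
    intro a
    simp only [Equiv.Perm.decomposeFin_symm_apply_zero, Equiv.Perm.decomposeFin_symm_apply_one]
    rw [← Equiv.sum_comp Equiv.Perm.decomposeFin.symm
      (fun e : Equiv.Perm (Fin (n + 1)) => F a (Equiv.swap 0 a (e 0).succ)),
      Fintype.sum_prod_type]
    simp only [Equiv.Perm.decomposeFin_symm_apply_zero, Finset.sum_const,
      Finset.card_univ, Fintype.card_perm, Fintype.card_fin, nsmul_eq_mul]
    rw [Finset.mul_sum]
  rw [Finset.sum_congr rfl fun a _ => step1 a, ← Finset.mul_sum]
  congr 1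
  refine Finset.sum_congr rfl fun a _ => ?_
  have key : ∑ b : Fin (n + 1), F a (Equiv.swap 0 a b.succ)
      = ∑ j ∈ Finset.univ.erase a, F a j := by
    have hne : ∀ x : Fin (n + 2), x ∈ Finset.univ.erase a → Equiv.swap 0 a x ≠ 0 := by
      intro x hx h0
      apply_fun (Equiv.swap 0 a) at h0
      rw [Equiv.swap_apply_self, Equiv.swap_apply_left] at h0
      exact (Finset.mem_erase.mp hx).1 h0
    refine Finset.sum_bij' (fun b _ => Equiv.swap 0 a b.succ)
      (fun x hx => ((Equiv.swap 0 a) x).pred (hne x hx)) ?_ (fun _ _ => Finset.mem_univ _)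
      ?_ ?_ (fun _ _ => rfl)
    · intro b _
      rw [Finset.mem_erase]
      refine ⟨fun h => Fin.succ_ne_zero b ?_, Finset.mem_univ _⟩
      have h' : Equiv.swap 0 a b.succ = a := h
      apply_fun (Equiv.swap 0 a) at h'
      rw [Equiv.swap_apply_self, Equiv.swap_apply_right] at h'
      exact h'
    · intro b _
      simp [Equiv.swap_apply_self, Fin.pred_succ]
    · intro x hx
      simp [Fin.succ_pred, Equiv.swap_apply_self]
  rw [key, Finset.sum_erase_eq_sub (Finset.mem_univ a)]

/-- Symmetrization of h(p₁,…,p_q) = q p₂ (u(p₂) - u(p₁)) with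
u(p) = log(1+p(e^{2β}-1)): (R h)(p) = (1/(q-1)) Σᵢ (q pᵢ - 1) u(pᵢ). -/
theorem stmt6 (q : ℕ) (hq : 2 ≤ q) (β : ℝ) (hβ : 0 < β) (p : Fin q → ℝ)
    (hp : ∀ i, 0 ≤ p i) (hsum : ∑ i, p i = 1) :
    (1 / (Nat.factorial q : ℝ)) *
      ∑ π : Equiv.Perm (Fin q),
        (q : ℝ) * p (π ⟨1, by omega⟩) *
          (Real.log (1 + p (π ⟨1, by omega⟩) * (Real.exp (2 * β) - 1)) -
           Real.log (1 + p (π ⟨0, by omega⟩) * (Real.exp (2 * β) - 1)))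
    = (1 / ((q : ℝ) - 1)) *
        ∑ i, ((q : ℝ) * p i - 1) * Real.log (1 + p i * (Real.exp (2 * β) - 1)) := by
  obtain ⟨n, rfl⟩ : ∃ n, q = n + 2 := ⟨q - 2, by omega⟩
  set u : Fin (n + 2) → ℝ :=
    fun i => Real.log (1 + p i * (Real.exp (2 * β) - 1)) with hu
  set S : ℝ := ∑ j, p j * u j with hS
  set U : ℝ := ∑ j, u j with hU
  have e0 : (⟨0, by omega⟩ : Fin (n + 2)) = 0 := rfl
  have e1 : (⟨1, by omega⟩ : Fin (n + 2)) = 1 := by ext; simp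
  simp only [e0, e1]
  rw [perm_pair_sum n (fun a j => ((n + 2 : ℕ) : ℝ) * p j * (u j - u a))]
  have inner : ∀ a : Fin (n + 2),
      (∑ j, ((n + 2 : ℕ) : ℝ) * p j * (u j - u a))
        = ((n + 2 : ℕ) : ℝ) * S - ((n + 2 : ℕ) : ℝ) * u a := by
    intro a
    have h1 : ∀ j, ((n + 2 : ℕ) : ℝ) * p j * (u j - u a)
        = ((n + 2 : ℕ) : ℝ) * (p j * u j) - (((n + 2 : ℕ) : ℝ) * u a) * p j :=
      fun j => by ring
    simp_rw [h1]
    rw [Finset.sum_sub_distrib, ← Finset.mul_sum, ← Finset.mul_sum, hsum, ← hS]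
    ring
  have hL : ∑ a, ((∑ j, ((n + 2 : ℕ) : ℝ) * p j * (u j - u a))
        - ((n + 2 : ℕ) : ℝ) * p a * (u a - u a))
      = ((n + 2 : ℕ) : ℝ) * (((n + 2 : ℕ) : ℝ) * S) - ((n + 2 : ℕ) : ℝ) * U := by
    simp_rw [inner, sub_self, mul_zero, sub_zero]
    rw [Finset.sum_sub_distrib, Finset.sum_const, ← Finset.mul_sum, ← hU,
      Finset.card_univ, Fintype.card_fin, nsmul_eq_mul]
  have hR : ∑ i, (((n + 2 : ℕ) : ℝ) * p i - 1) * u i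
      = ((n + 2 : ℕ) : ℝ) * S - U := by
    have h1 : ∀ i, (((n + 2 : ℕ) : ℝ) * p i - 1) * u i
        = ((n + 2 : ℕ) : ℝ) * (p i * u i) - u i := fun i => by ring
    simp_rw [h1]
    rw [Finset.sum_sub_distrib, ← Finset.mul_sum, ← hS, ← hU]
  rw [hL, hR]
  push_cast
  have hfac : ((n + 2).factorial : ℝ) = ((n : ℝ) + 2) * ((n : ℝ) + 1) * (n.factorial : ℝ) := by
    rw [show n + 2 = (n + 1) + 1 from rfl, Nat.factorial_succ, Nat.factorial_succ]
    push_cast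
    ring
  rw [hfac]
  have hfn : (n.factorial : ℝ) ≠ 0 := Nat.cast_ne_zero.mpr n.factorial_ne_zero
  have h2 : (n : ℝ) + 2 ≠ 0 := by positivity
  have h1 : (n : ℝ) + 2 - 1 ≠ 0 := by
    have : (0:ℝ) ≤ (n:ℝ) := Nat.cast_nonneg n
    intro h; nlinarith
  field_simp
  ring
end

section
/- For q ≥ 2 and β > 0, one has c̄(β,q) ≥ (e^{2β}−1)/(q−1+e^{2β}), where c̄(β,q) = sup over probability vectors p of [Σᵢ (q pᵢ − 1) log(1+(e^{2β}−1)pᵢ)] / [Σᵢ (q pᵢ − 1) log(q pᵢ)]. -/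
open scoped BigOperators

open Finset Filter Topology

private lemma aux1 (x : ℝ) (hx : 0 ≤ x) : 0 ≤ (x - 1) * Real.log x := by
  rcases eq_or_lt_of_le hx with h | h
  · simp [← h]
  rcases le_total x 1 with h1 | h1
  · nlinarith [mul_nonneg (by linarith : (0:ℝ) ≤ 1 - x)
      (by linarith [Real.log_nonpos hx h1] : (0:ℝ) ≤ -Real.log x)]
  · exact mul_nonneg (by linarith) (Real.log_nonneg h1)

private lemma aux2 (x Q : ℝ) (hx : 0 ≤ x) (hxQ : x ≤ Q) :
    (max (x - 1) 0) ^ 2 ≤ Q * ((x - 1) * Real.log x) := by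
  rcases le_total x 1 with h1 | h1
  · rw [max_eq_right (by linarith)]
    have := aux1 x hx
    nlinarith
  · rw [max_eq_left (by linarith)]
    have hx1 : (0:ℝ) < x := by linarith
    have hlog1 : Real.log (1/x) ≤ 1/x - 1 := Real.log_le_sub_one_of_pos (by positivity)
    rw [Real.log_div one_ne_zero hx1.ne', Real.log_one] at hlog1
    have hkey : x - 1 ≤ x * Real.log x := by
      have h0 : 1 - 1/x ≤ Real.log x := by linarith
      have h2 := mul_le_mul_of_nonneg_left h0 (le_of_lt hx1)
      have h3 : x * (1 - 1/x) = x - 1 := by field_simp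
      linarith [h2, h3 ▸ h2]
    have hlognn : 0 ≤ Real.log x := Real.log_nonneg h1
    have h3 : (x - 1) * (x - 1) ≤ (x - 1) * (x * Real.log x) :=
      mul_le_mul_of_nonneg_left hkey (by linarith)
    have h4 : x * Real.log x ≤ Q * Real.log x := mul_le_mul_of_nonneg_right hxQ hlognn
    have h5 : (x - 1) * (x * Real.log x) ≤ (x - 1) * (Q * Real.log x) :=
      mul_le_mul_of_nonneg_left h4 (by linarith)
    nlinarith

private lemma aux3 (Q lam p : ℝ) (hQ : 0 < Q) (hlam : 0 < lam) (hp : 0 < p) :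
    (Q * p - 1) * Real.log (1 + lam * p) ≤
      (Q * p - 1) * Real.log (Q * p) + Real.log (1 + lam / Q) * (Q * p - 1) := by
  have hQp : 0 < Q * p := mul_pos hQ hp
  have h1 : (0:ℝ) < 1 + lam * p := by positivity
  have h2 : (0:ℝ) < 1 + lam / Q := by positivity
  have hlog : Real.log (Q * p) + Real.log (1 + lam / Q) = Real.log (Q * p + lam * p) := by
    rw [← Real.log_mul hQp.ne' h2.ne']
    congr 1
    field_simp
  rcases le_total 1 (Q * p) with h | h
  · have hle : Real.log (1 + lam * p) ≤ Real.log (Q * p + lam * p) := by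
      apply Real.log_le_log h1
      linarith
    have := mul_le_mul_of_nonneg_left hle (by linarith : (0:ℝ) ≤ Q * p - 1)
    nlinarith [hlog]
  · have hle : Real.log (Q * p + lam * p) ≤ Real.log (1 + lam * p) := by
      apply Real.log_le_log (by positivity)
      linarith
    have := mul_le_mul_of_nonpos_left hle (by linarith : Q * p - 1 ≤ 0)
    nlinarith [hlog]

private lemma sum_split {q : ℕ} (i0 : Fin q) (h : ℝ → ℝ) (a b : ℝ) :
    ∑ i : Fin q, h (if i = i0 then a else b)
      = h a + ((q:ℝ) - 1) * h b := by
  have hq : 1 ≤ q := i0.pos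
  have h0 : i0 ∈ (univ : Finset (Fin q)) := mem_univ _
  rw [← Finset.sum_erase_add _ _ h0, if_pos rfl, add_comm]
  congr 1
  rw [Finset.sum_congr rfl (fun i hi => by
    rw [if_neg (Finset.ne_of_mem_erase hi)]), Finset.sum_const,
    Finset.card_erase_of_mem h0, Finset.card_univ, Fintype.card_fin,
    nsmul_eq_mul, Nat.cast_sub (by omega), Nat.cast_one]

set_option maxHeartbeats 1600000 in

/-- Kesten–Stigum lower bound: c̄(β,q) ≥ (e^{2β}-1)/(q-1+e^{2β}), where c̄(β,q)
is the supremum over probability vectors (with nonvanishing denominator) of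
[Σᵢ (q pᵢ - 1) log(1+(e^{2β}-1)pᵢ)] / [Σᵢ (q pᵢ - 1) log(q pᵢ)]. -/
theorem stmt11 (q : ℕ) (hq : 2 ≤ q) (β : ℝ) (hβ : 0 < β) :
    (Real.exp (2 * β) - 1) / ((q : ℝ) - 1 + Real.exp (2 * β)) ≤
      sSup { r : ℝ | ∃ p : Fin q → ℝ, (∀ i, 0 ≤ p i) ∧ (∑ i, p i = 1) ∧
        (∑ i, ((q : ℝ) * p i - 1) * Real.log ((q : ℝ) * p i)) ≠ 0 ∧
        r = (∑ i, ((q : ℝ) * p i - 1) * Real.log (1 + (Real.exp (2 * β) - 1) * p i)) /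
            (∑ i, ((q : ℝ) * p i - 1) * Real.log ((q : ℝ) * p i)) } := by
  set lam : ℝ := Real.exp (2 * β) - 1 with hlamdef
  have hlam : 0 < lam := by
    have : (1:ℝ) < Real.exp (2 * β) := by
      rw [show (1:ℝ) = Real.exp 0 by simp]
      exact Real.exp_lt_exp.mpr (by linarith)
    simp only [hlamdef]; linarith
  have hQ0 : (0:ℝ) < (q:ℝ) := by positivity
  have hQ2 : (2:ℝ) ≤ (q:ℝ) := by exact_mod_cast hq
  set c : ℝ := Real.log (1 + lam / (q:ℝ)) with hcdef
  have hc : 0 ≤ c := Real.log_nonneg (by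
    have : 0 ≤ lam / (q:ℝ) := by positivity
    linarith)
  set S := { r : ℝ | ∃ p : Fin q → ℝ, (∀ i, 0 ≤ p i) ∧ (∑ i, p i = 1) ∧
        (∑ i, ((q : ℝ) * p i - 1) * Real.log ((q : ℝ) * p i)) ≠ 0 ∧
        r = (∑ i, ((q : ℝ) * p i - 1) * Real.log (1 + lam * p i)) /
            (∑ i, ((q : ℝ) * p i - 1) * Real.log ((q : ℝ) * p i)) } with hSdef
  -- Part 1 : bounded above
  have hBdd : BddAbove S := by
    refine ⟨1 + c * (q:ℝ)^2, ?_⟩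
    rintro r ⟨p, hp0, hp1, hD, rfl⟩
    set D := ∑ i, ((q : ℝ) * p i - 1) * Real.log ((q : ℝ) * p i) with hDdef
    set N := ∑ i, ((q : ℝ) * p i - 1) * Real.log (1 + lam * p i) with hNdef
    have hxnn : ∀ i, (0:ℝ) ≤ (q:ℝ) * p i := fun i => mul_nonneg hQ0.le (hp0 i)
    have hDnn : 0 ≤ D := Finset.sum_nonneg fun i _ => aux1 _ (hxnn i)
    have hDpos : 0 < D := hDnn.lt_of_ne (Ne.symm hD)
    have hple : ∀ i, p i ≤ 1 := by
      intro i
      rw [← hp1]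
      exact Finset.single_le_sum (fun j _ => hp0 j) (mem_univ i)
    set Zs := univ.filter (fun i => p i = 0) with hZsdef
    set Zc : ℝ := (Zs.card : ℝ) with hZcdef
    have hsum0 : ∑ i, ((q:ℝ) * p i - 1) = 0 := by
      rw [Finset.sum_sub_distrib, ← Finset.mul_sum, hp1, Finset.sum_const,
        Finset.card_univ, Fintype.card_fin]
      simp
    -- step 1 : N ≤ D + c * Zc
    have step1 : N ≤ D + c * Zc := by
      have per : ∀ i ∈ (univ : Finset (Fin q)),
          ((q:ℝ) * p i - 1) * Real.log (1 + lam * p i) ≤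
            ((q:ℝ) * p i - 1) * Real.log ((q:ℝ) * p i) + c * ((q:ℝ) * p i - 1)
              + (if p i = 0 then c else 0) := by
        intro i _
        by_cases h : p i = 0
        · simp [h]
        · rw [if_neg h, add_zero, hcdef]
          exact aux3 (q:ℝ) lam (p i) hQ0 hlam ((hp0 i).lt_of_ne (Ne.symm h))
      calc N ≤ ∑ i, (((q:ℝ) * p i - 1) * Real.log ((q:ℝ) * p i) + c * ((q:ℝ) * p i - 1)
              + (if p i = 0 then c else 0)) := Finset.sum_le_sum per
        _ = D + c * (∑ i, ((q:ℝ) * p i - 1)) + ∑ i, (if p i = 0 then c else 0) := by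
            rw [Finset.sum_add_distrib, Finset.sum_add_distrib, ← Finset.mul_sum]
        _ = D + c * Zc := by
            rw [hsum0, mul_zero, add_zero]
            congr 1
            rw [← Finset.sum_filter, Finset.sum_const, nsmul_eq_mul]
            simp [hZcdef, hZsdef, mul_comm]
    -- step 2 : Zc ≤ q^2 * D
    have step2 : Zc ≤ (q:ℝ)^2 * D := by
      have hxle : ∀ i, (q:ℝ) * p i ≤ (q:ℝ) := by
        intro i
        calc (q:ℝ) * p i ≤ (q:ℝ) * 1 := mul_le_mul_of_nonneg_left (hple i) hQ0.le
          _ = (q:ℝ) := mul_one _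
      have hms : ∑ i, (max ((q:ℝ) * p i - 1) 0) ^ 2 ≤ (q:ℝ) * D := by
        rw [hDdef, Finset.mul_sum]
        exact Finset.sum_le_sum fun i _ => aux2 _ _ (hxnn i) (hxle i)
      have hmm : ∑ i, max ((q:ℝ) * p i - 1) 0 = ∑ i, max (1 - (q:ℝ) * p i) 0 := by
        have : ∀ i ∈ (univ : Finset (Fin q)), max ((q:ℝ) * p i - 1) 0
            = max (1 - (q:ℝ) * p i) 0 + ((q:ℝ) * p i - 1) := by
          intro i _
          rcases le_total ((q:ℝ) * p i) 1 with h | h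
          · rw [max_eq_right (by linarith), max_eq_left (by linarith)]; ring
          · rw [max_eq_left (by linarith), max_eq_right (by linarith)]; ring
        rw [Finset.sum_congr rfl this, Finset.sum_add_distrib, hsum0, add_zero]
      have hZm : Zc ≤ ∑ i, max ((q:ℝ) * p i - 1) 0 := by
        rw [hmm]
        calc Zc = ∑ _i ∈ Zs, (1:ℝ) := by rw [Finset.sum_const]; simp [hZcdef]
          _ = ∑ i ∈ Zs, max (1 - (q:ℝ) * p i) 0 := by
              refine Finset.sum_congr rfl fun i hi => ?_
              rw [hZsdef] at hi
              rw [(Finset.mem_filter.mp hi).2]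
              norm_num
          _ ≤ ∑ i, max (1 - (q:ℝ) * p i) 0 :=
              Finset.sum_le_sum_of_subset_of_nonneg (Finset.filter_subset _ _)
                (fun i _ _ => le_max_right _ _)
      have hZnn : 0 ≤ Zc := by positivity
      have hZZ : Zc ≤ Zc ^ 2 := by
        rcases Nat.eq_zero_or_pos Zs.card with h | h
        · simp [hZcdef, h]
        · have : (1:ℝ) ≤ Zc := by
            rw [hZcdef]; exact_mod_cast h
          nlinarith
      have hCS : (∑ i, max ((q:ℝ) * p i - 1) 0) ^ 2
          ≤ (q:ℝ) * ∑ i, (max ((q:ℝ) * p i - 1) 0) ^ 2 := by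
        have := sq_sum_le_card_mul_sum_sq (s := (univ : Finset (Fin q)))
          (f := fun i => max ((q:ℝ) * p i - 1) 0)
        simpa using this
      calc Zc ≤ Zc ^ 2 := hZZ
        _ ≤ (∑ i, max ((q:ℝ) * p i - 1) 0) ^ 2 := pow_le_pow_left₀ hZnn hZm 2
        _ ≤ (q:ℝ) * ∑ i, (max ((q:ℝ) * p i - 1) 0) ^ 2 := hCS
        _ ≤ (q:ℝ) * ((q:ℝ) * D) := mul_le_mul_of_nonneg_left hms hQ0.le
        _ = (q:ℝ)^2 * D := by ring
    rw [div_le_iff₀ hDpos]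
    have h1 : c * Zc ≤ c * ((q:ℝ)^2 * D) := mul_le_mul_of_nonneg_left step2 hc
    nlinarith [step1, h1]
  -- Part 2 : the limit along near-uniform vectors
  set i0 : Fin q := ⟨0, by omega⟩ with hi0def
  set F : ℝ → ℝ := fun t => Real.log (1 + lam * ((1 + ((q:ℝ)-1)*t)/(q:ℝ)))
      - Real.log (1 + lam * ((1-t)/(q:ℝ))) with hFdef
  set G : ℝ → ℝ := fun t => Real.log (1 + ((q:ℝ)-1)*t) - Real.log (1-t) with hGdef
  have hQne : (q:ℝ) ≠ 0 := hQ0.ne'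
  have hu : HasDerivAt (fun t:ℝ => 1 + lam * ((1 + ((q:ℝ)-1)*t)/(q:ℝ)))
      (lam * (((q:ℝ)-1)/(q:ℝ))) 0 := by
    have h1 : HasDerivAt (fun t:ℝ => ((q:ℝ)-1)*t) ((q:ℝ)-1) 0 := by
      simpa using (hasDerivAt_id (0:ℝ)).const_mul ((q:ℝ)-1)
    exact (((h1.const_add 1).div_const (q:ℝ)).const_mul lam).const_add 1
  have hv : HasDerivAt (fun t:ℝ => 1 + lam * ((1 - t)/(q:ℝ))) (lam * (-1/(q:ℝ))) 0 := by
    have h1 : HasDerivAt (fun t:ℝ => 1 - t) (-1:ℝ) 0 := by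
      simpa using (hasDerivAt_id (0:ℝ)).const_sub 1
    exact (((h1.div_const (q:ℝ)).const_mul lam).const_add 1)
  have hqlam : (0:ℝ) < (q:ℝ) + lam := by positivity
  have hF : HasDerivAt F (lam * (q:ℝ) / ((q:ℝ) + lam)) 0 := by
    have hne1 : (1:ℝ) + lam * ((1 + ((q:ℝ)-1)*0)/(q:ℝ)) ≠ 0 := by
      have : (0:ℝ) < 1 + lam * ((1 + ((q:ℝ)-1)*0)/(q:ℝ)) := by
        rw [mul_zero, add_zero]; positivity
      exact this.ne'
    have hne2 : (1:ℝ) + lam * ((1 - 0)/(q:ℝ)) ≠ 0 := by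
      have : (0:ℝ) < 1 + lam * ((1 - 0)/(q:ℝ)) := by norm_num; positivity
      exact this.ne'
    have h2 := (hu.log hne1).sub (hv.log hne2)
    refine h2.congr_deriv ?_
    symm
    rw [mul_zero, add_zero]
    field_simp
    ring
  have hG : HasDerivAt G (q:ℝ) 0 := by
    have ha : HasDerivAt (fun t:ℝ => 1 + ((q:ℝ)-1)*t) ((q:ℝ)-1) 0 := by
      have h1 : HasDerivAt (fun t:ℝ => ((q:ℝ)-1)*t) ((q:ℝ)-1) 0 := by
        simpa using (hasDerivAt_id (0:ℝ)).const_mul ((q:ℝ)-1)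
      exact h1.const_add 1
    have hb : HasDerivAt (fun t:ℝ => 1 - t) (-1:ℝ) 0 := by
      simpa using (hasDerivAt_id (0:ℝ)).const_sub 1
    have h2 := (ha.log (by norm_num)).sub (hb.log (by norm_num))
    refine h2.congr_deriv ?_
    symm
    norm_num
  have hF0 : F 0 = 0 := by norm_num [hFdef]
  have hG0 : G 0 = 0 := by norm_num [hGdef]
  rw [hasDerivAt_iff_tendsto_slope] at hF hG
  have htend0 : Tendsto (fun t => slope F 0 t / slope G 0 t) (𝓝[≠] (0:ℝ))
      (𝓝 (lam * (q:ℝ) / ((q:ℝ) + lam) / (q:ℝ))) := hF.div hG hQne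
  have htend : Tendsto (fun t => F t / G t) (𝓝[>] (0:ℝ))
      (𝓝 (lam * (q:ℝ) / ((q:ℝ) + lam) / (q:ℝ))) := by
    have hmono := htend0.mono_left (nhdsWithin_mono (0:ℝ)
      (fun x hx => (ne_of_gt hx : x ≠ 0)))
    refine hmono.congr' ?_
    filter_upwards [self_mem_nhdsWithin] with t ht
    have ht0 : t ≠ 0 := ne_of_gt ht
    rw [slope_def_field, slope_def_field, hF0, hG0, sub_zero, sub_zero, sub_zero,
      div_div_div_comm, div_self ht0, div_one]
  have hval : lam * (q:ℝ) / ((q:ℝ) + lam) / (q:ℝ) = lam / ((q:ℝ) - 1 + Real.exp (2*β)) := by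
    have h1 : (q:ℝ) - 1 + Real.exp (2*β) = (q:ℝ) + lam := by rw [hlamdef]; ring
    rw [h1, div_div, mul_comm ((q:ℝ) + lam) (q:ℝ), ← div_div, mul_div_assoc,
      div_self hQne, mul_one]
  rw [hval] at htend
  refine le_of_tendsto htend ?_
  filter_upwards [Ioo_mem_nhdsGT_of_mem
    (Set.left_mem_Ico.mpr (by norm_num : (0:ℝ) < 1/2))] with t ht
  obtain ⟨ht0, ht2⟩ := ht
  have hQ1 : (1:ℝ) ≤ (q:ℝ) - 1 := by linarith
  have e0 := sum_split i0 (fun z : ℝ => z) ((1 + ((q:ℝ)-1)*t)/(q:ℝ)) ((1-t)/(q:ℝ))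
  have eD := sum_split i0 (fun z : ℝ => ((q:ℝ)*z - 1) * Real.log ((q:ℝ)*z))
      ((1 + ((q:ℝ)-1)*t)/(q:ℝ)) ((1-t)/(q:ℝ))
  have eN := sum_split i0 (fun z : ℝ => ((q:ℝ)*z - 1) * Real.log (1 + lam*z))
      ((1 + ((q:ℝ)-1)*t)/(q:ℝ)) ((1-t)/(q:ℝ))
  have hxa : (q:ℝ) * ((1 + ((q:ℝ)-1)*t)/(q:ℝ)) = 1 + ((q:ℝ)-1)*t := by field_simp
  have hxb : (q:ℝ) * ((1-t)/(q:ℝ)) = 1 - t := by field_simp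
  rw [hxa, hxb] at eD eN
  have hGpos : 0 < G t := by
    have h1 : 0 < Real.log (1 + ((q:ℝ)-1)*t) := Real.log_pos (by nlinarith)
    have h2 : Real.log (1-t) < 0 := Real.log_neg (by linarith) (by linarith)
    rw [hGdef]
    dsimp only
    linarith
  have hspos : 0 < ((q:ℝ)-1) * t := mul_pos (by linarith) ht0
  have eDv : ∑ i, ((q:ℝ) * (if i = i0 then (1 + ((q:ℝ)-1)*t)/(q:ℝ) else (1-t)/(q:ℝ)) - 1)
        * Real.log ((q:ℝ) * (if i = i0 then (1 + ((q:ℝ)-1)*t)/(q:ℝ) else (1-t)/(q:ℝ)))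
      = (((q:ℝ)-1) * t) * G t := by
    rw [eD, hGdef]
    dsimp only
    ring
  have eNv : ∑ i, ((q:ℝ) * (if i = i0 then (1 + ((q:ℝ)-1)*t)/(q:ℝ) else (1-t)/(q:ℝ)) - 1)
        * Real.log (1 + lam * (if i = i0 then (1 + ((q:ℝ)-1)*t)/(q:ℝ) else (1-t)/(q:ℝ)))
      = (((q:ℝ)-1) * t) * F t := by
    rw [eN, hFdef]
    dsimp only
    ring
  have hmem : (((q:ℝ)-1) * t * F t) / (((q:ℝ)-1) * t * G t) ∈ S := by
    simp only [hSdef, Set.mem_setOf_eq]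
    refine ⟨fun i => if i = i0 then (1 + ((q:ℝ)-1)*t)/(q:ℝ) else (1-t)/(q:ℝ),
      ?_, ?_, ?_, ?_⟩
    · intro i
      dsimp only
      split_ifs
      · exact div_nonneg (by nlinarith) hQ0.le
      · exact div_nonneg (by linarith) hQ0.le
    · rw [e0]
      field_simp
      ring
    · rw [eDv]
      exact (mul_pos hspos hGpos).ne'
    · rw [eNv, eDv]
  calc F t / G t = (((q:ℝ)-1) * t * F t) / (((q:ℝ)-1) * t * G t) :=
        (mul_div_mul_left (F t) (G t) hspos.ne').symm
    _ ≤ sSup S := le_csSup hBdd hmem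
end

section
/- For q = 2 and β > 0, c̄(β,2) = tanh(β); that is, for all x ∈ (−1/2, 1/2), x ≠ 0, log((1+λx)/(1−λx)) / log((1+2x)/(1−2x)) ≤ λ/2 = tanh(β), where λ = 2(e^{2β}−1)/(e^{2β}+1), and the supremum over x is λ/2, attained in the limit x → 0. -/
open Filter

-- key monotonicity inequality
lemma aux_key (lam : ℝ) (h0 : 0 < lam) (h2 : lam < 2) :
    ∀ x : ℝ, 0 < x → x < 1/2 →
    2 * (Real.log (1 + lam*x) - Real.log (1 - lam*x)) ≤
      lam * (Real.log (1 + 2*x) - Real.log (1 - 2*x)) := by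
  intro x hx hx2
  set F : ℝ → ℝ := fun y => lam * Real.log (1+2*y) - lam * Real.log (1-2*y)
      - 2 * Real.log (1 + lam*y) + 2 * Real.log (1 - lam*y) with hFdef
  have hpos : ∀ y ∈ Set.Icc (0:ℝ) x, 0 < 1 + 2*y ∧ 0 < 1 - 2*y ∧ 0 < 1 + lam*y ∧ 0 < 1 - lam*y := by
    intro y hy
    obtain ⟨hy0, hy1⟩ := hy
    have h1 : y < 1/2 := lt_of_le_of_lt hy1 hx2
    have h3 : lam * y < 1 := by nlinarith
    have h4 : 0 ≤ lam * y := by positivity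
    constructor; · linarith
    constructor; · linarith
    constructor; · linarith
    · linarith
  have hder : ∀ y ∈ Set.Icc (0:ℝ) x, HasDerivAt F
      (lam * (2/(1+2*y)) - lam * (-2/(1-2*y)) - 2 * (lam/(1+lam*y)) + 2 * (-lam/(1-lam*y))) y := by
    intro y hy
    obtain ⟨p1, p2, p3, p4⟩ := hpos y hy
    have d1 : HasDerivAt (fun y : ℝ => Real.log (1+2*y)) (2/(1+2*y)) y := by
      have : HasDerivAt (fun y : ℝ => 1+2*y) 2 y := by
        simpa using ((hasDerivAt_id y).const_mul 2).const_add 1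
      simpa using this.log p1.ne'
    have d2 : HasDerivAt (fun y : ℝ => Real.log (1-2*y)) (-2/(1-2*y)) y := by
      have : HasDerivAt (fun y : ℝ => 1-2*y) (-2) y := by
        have := ((hasDerivAt_id y).const_mul 2).const_add 1
        have h := ((hasDerivAt_id y).const_mul (2:ℝ)).neg.const_add 1
        simpa [sub_eq_add_neg] using h
      simpa using this.log p2.ne'
    have d3 : HasDerivAt (fun y : ℝ => Real.log (1+lam*y)) (lam/(1+lam*y)) y := by
      have : HasDerivAt (fun y : ℝ => 1+lam*y) lam y := by
        simpa using ((hasDerivAt_id y).const_mul lam).const_add 1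
      simpa using this.log p3.ne'
    have d4 : HasDerivAt (fun y : ℝ => Real.log (1-lam*y)) (-lam/(1-lam*y)) y := by
      have : HasDerivAt (fun y : ℝ => 1-lam*y) (-lam) y := by
        have h := ((hasDerivAt_id y).const_mul lam).neg.const_add 1
        simpa [sub_eq_add_neg] using h
      simpa using this.log p4.ne'
    exact (((d1.const_mul lam).sub (d2.const_mul lam)).sub (d3.const_mul 2)).add (d4.const_mul 2)
  have hmono : MonotoneOn F (Set.Icc 0 x) := by
    apply monotoneOn_of_deriv_nonneg (convex_Icc 0 x)
    · exact fun y hy => (hder y hy).continuousAt.continuousWithinAt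
    · intro y hy
      rw [interior_Icc] at hy
      exact (hder y (Set.mem_Icc_of_Ioo hy)).differentiableAt.differentiableWithinAt
    · intro y hy
      rw [interior_Icc] at hy
      have hy' : y ∈ Set.Icc (0:ℝ) x := Set.mem_Icc_of_Ioo hy
      rw [(hder y hy').deriv]
      obtain ⟨p1, p2, p3, p4⟩ := hpos y hy'
      have e1 : lam * (2/(1+2*y)) - lam * (-2/(1-2*y)) - 2 * (lam/(1+lam*y)) + 2 * (-lam/(1-lam*y))
          = 2*lam * (2/(1-(2*y)^2) - 2/(1-(lam*y)^2)) := by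
        have r1 : 1 - (2*y)^2 = (1+2*y)*(1-2*y) := by ring
        have r2 : 1 - (lam*y)^2 = (1+lam*y)*(1-lam*y) := by ring
        rw [r1, r2]
        field_simp
        ring
      rw [e1]
      have q1 : 0 < 1 - (2*y)^2 := by nlinarith
      have hl4 : 0 < 4 - lam^2 := by nlinarith
      have hyy : 0 ≤ y^2 := sq_nonneg y
      have q2 : 1 - (2*y)^2 ≤ 1 - (lam*y)^2 := by nlinarith [mul_nonneg hl4.le hyy]
      have : (2:ℝ)/(1-(lam*y)^2) ≤ 2/(1-(2*y)^2) := by gcongr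
      have : (0:ℝ) ≤ 2/(1-(2*y)^2) - 2/(1-(lam*y)^2) := by linarith
      positivity
  have h0x : (0:ℝ) ∈ Set.Icc (0:ℝ) x := by constructor <;> linarith
  have hxx : x ∈ Set.Icc (0:ℝ) x := by constructor <;> linarith
  have := hmono h0x hxx hx.le
  have hF0 : F 0 = 0 := by simp [hFdef]
  rw [hF0] at this
  simp only [hFdef] at this
  linarith

/-- For q = 2, c̄(β,2) = tanh β: with λ = 2(e^{2β}-1)/(e^{2β}+1), for all
x ∈ (−1/2,1/2), x ≠ 0, log((1+λx)/(1-λx))/log((1+2x)/(1-2x)) ≤ λ/2 = tanh β,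
and the supremum λ/2 is attained in the limit x → 0. -/
theorem stmt12 (β : ℝ) (hβ : 0 < β) (lam : ℝ)
    (hlam : lam = 2 * (Real.exp (2 * β) - 1) / (Real.exp (2 * β) + 1)) :
    (∀ x : ℝ, x ∈ Set.Ioo (-(1 / 2) : ℝ) (1 / 2) → x ≠ 0 →
        Real.log ((1 + lam * x) / (1 - lam * x)) /
          Real.log ((1 + 2 * x) / (1 - 2 * x)) ≤ lam / 2) ∧
    lam / 2 = Real.tanh β ∧
    Tendsto (fun x : ℝ =>
        Real.log ((1 + lam * x) / (1 - lam * x)) /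
          Real.log ((1 + 2 * x) / (1 - 2 * x)))
      (nhdsWithin 0 (Set.Ioo (-(1 / 2) : ℝ) (1 / 2) \ {0})) (nhds (lam / 2)) := by
  have hE : 1 < Real.exp (2*β) := by nlinarith [Real.add_one_le_exp (2*β)]
  have hE1 : (0:ℝ) < Real.exp (2*β) + 1 := by positivity
  have h0 : 0 < lam := by
    rw [hlam]; exact div_pos (by linarith) hE1
  have h2 : lam < 2 := by
    rw [hlam, div_lt_iff₀ hE1]; nlinarith
  refine ⟨?_, ?_, ?_⟩
  · -- the inequality
    intro x hx hne
    rcases lt_or_gt_of_ne hne with hneg | hpos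
    · -- x < 0
      have hu : 0 < -x := by linarith
      have hu2 : -x < 1/2 := by have := hx.1; linarith
      have key := aux_key lam h0 h2 (-x) hu hu2
      have p2 : (0:ℝ) < 1 - 2*(-x) := by linarith
      have p4 : (0:ℝ) < 1 - lam*(-x) := by nlinarith
      have p1 : (0:ℝ) < 1 + 2*(-x) := by linarith
      have p3 : (0:ℝ) < 1 + lam*(-x) := by positivity
      have e1 : 1 + lam * x = 1 - lam*(-x) := by ring
      have e2 : 1 - lam * x = 1 + lam*(-x) := by ring
      have e3 : 1 + 2 * x = 1 - 2*(-x) := by ring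
      have e4 : 1 - 2 * x = 1 + 2*(-x) := by ring
      rw [e1, e2, e3, e4, Real.log_div p4.ne' p3.ne', Real.log_div p2.ne' p1.ne']
      have hDneg : Real.log (1 - 2*(-x)) - Real.log (1 + 2*(-x)) < 0 := by
        have := Real.log_lt_log p2 (by linarith : 1 - 2*(-x) < 1 + 2*(-x))
        linarith
      rw [div_le_iff_of_neg hDneg]
      nlinarith [key]
    · -- x > 0
      have hx2 : x < 1/2 := hx.2
      have key := aux_key lam h0 h2 x hpos hx2
      have p2 : (0:ℝ) < 1 - 2*x := by linarith
      have p4 : (0:ℝ) < 1 - lam*x := by nlinarith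
      have p1 : (0:ℝ) < 1 + 2*x := by linarith
      have p3 : (0:ℝ) < 1 + lam*x := by positivity
      rw [Real.log_div p3.ne' p4.ne', Real.log_div p1.ne' p2.ne']
      have hDpos : 0 < Real.log (1 + 2*x) - Real.log (1 - 2*x) := by
        have := Real.log_lt_log p2 (by linarith : 1 - 2*x < 1 + 2*x)
        linarith
      rw [div_le_iff₀ hDpos]
      nlinarith [key]
  · -- lam/2 = tanh β
    rw [hlam, Real.tanh_eq_sinh_div_cosh, Real.sinh_eq, Real.cosh_eq]
    have h2b : Real.exp (2*β) = Real.exp β * Real.exp β := by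
      rw [two_mul, Real.exp_add]
    have hne : Real.exp β ≠ 0 := (Real.exp_pos β).ne'
    have hne2 : Real.exp β + Real.exp (-β) ≠ 0 := by positivity
    rw [h2b, Real.exp_neg]
    field_simp
  · -- the limit
    set N : ℝ → ℝ := fun x => Real.log ((1 + lam * x) / (1 - lam * x)) with hNdef
    set D : ℝ → ℝ := fun x => Real.log ((1 + 2 * x) / (1 - 2 * x)) with hDdef
    have hN : HasDerivAt N (2*lam) 0 := by
      have h1 : HasDerivAt (fun x : ℝ => 1 + lam*x) lam 0 := by
        simpa using ((hasDerivAt_id (0:ℝ)).const_mul lam).const_add 1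
      have h2' : HasDerivAt (fun x : ℝ => 1 - lam*x) (-lam) 0 := by
        simpa [sub_eq_add_neg] using ((hasDerivAt_id (0:ℝ)).const_mul lam).neg.const_add 1
      have hdiv := h1.div h2' (by norm_num)
      have := hdiv.log (by norm_num)
      convert this using 1
      · rfl
      norm_num [Pi.div_apply]
      ring
    have hD : HasDerivAt D 4 0 := by
      have h1 : HasDerivAt (fun x : ℝ => 1 + 2*x) 2 0 := by
        simpa using ((hasDerivAt_id (0:ℝ)).const_mul (2:ℝ)).const_add 1
      have h2' : HasDerivAt (fun x : ℝ => 1 - 2*x) (-2) 0 := by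
        simpa [sub_eq_add_neg] using ((hasDerivAt_id (0:ℝ)).const_mul (2:ℝ)).neg.const_add 1
      have hdiv := h1.div h2' (by norm_num)
      have := hdiv.log (by norm_num)
      convert this using 1
      · rfl
      norm_num [Pi.div_apply]
    have hNs := hasDerivAt_iff_tendsto_slope.mp hN
    have hDs := hasDerivAt_iff_tendsto_slope.mp hD
    have hq : Tendsto (fun x => slope N 0 x / slope D 0 x) (nhdsWithin 0 {(0:ℝ)}ᶜ)
        (nhds (2*lam/4)) := hNs.div hDs (by norm_num)
    have hsub : Set.Ioo (-(1 / 2) : ℝ) (1 / 2) \ {0} ⊆ {(0:ℝ)}ᶜ := fun x hx => hx.2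
    have hq2 := hq.mono_left (nhdsWithin_mono 0 hsub)
    have heq : ∀ᶠ x in nhdsWithin 0 (Set.Ioo (-(1 / 2) : ℝ) (1 / 2) \ {0}),
        slope N 0 x / slope D 0 x = N x / D x := by
      filter_upwards [self_mem_nhdsWithin] with x hx
      have hxne : x ≠ 0 := hx.2
      have hN0 : N 0 = 0 := by simp [hNdef]
      have hD0 : D 0 = 0 := by simp [hDdef]
      rw [slope_def_field, slope_def_field, hN0, hD0]
      simp only [sub_zero]
      rw [div_div_div_cancel_right₀ hxne]
    have : (2*lam/4 : ℝ) = lam/2 := by ring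
    rw [this] at hq2
    exact (Tendsto.congr' heq hq2 : _)
end

section
/- Let λ ∈ (0, 2). The function x ↦ log((1+λx)/(1−λx)) / log((1+2x)/(1−2x)), defined on (−1/2,1/2) \ {0}, attains its supremum λ/2 only in the limit x → 0; equivalently, log((1+λx)/(1−λx)) ≤ (λ/2) log((1+2x)/(1−2x)) for all x ∈ [0, 1/2), with equality only at x = 0. -/
/-- For λ ∈ (0,2): log((1+λx)/(1-λx)) ≤ (λ/2) log((1+2x)/(1-2x)) for all
x ∈ [0,1/2), with equality only at x = 0. -/
theorem stmt13 (lam : ℝ) (hlam : lam ∈ Set.Ioo (0 : ℝ) 2) :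
    ∀ x : ℝ, 0 ≤ x → x < 1 / 2 →
      Real.log ((1 + lam * x) / (1 - lam * x)) ≤
          (lam / 2) * Real.log ((1 + 2 * x) / (1 - 2 * x)) ∧
        (Real.log ((1 + lam * x) / (1 - lam * x)) =
            (lam / 2) * Real.log ((1 + 2 * x) / (1 - 2 * x)) ↔ x = 0) := by
  obtain ⟨hl0, hl2⟩ := hlam
  set g : ℝ → ℝ := fun y =>
    (lam / 2) * (Real.log (1 + 2 * y) - Real.log (1 - 2 * y))
      - (Real.log (1 + lam * y) - Real.log (1 - lam * y)) with hgdef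
  have hpos : ∀ y ∈ Set.Ico (0 : ℝ) (1 / 2),
      0 < 1 + 2 * y ∧ 0 < 1 - 2 * y ∧ 0 < 1 + lam * y ∧ 0 < 1 - lam * y := by
    rintro y ⟨hy0, hy⟩
    have h1 : lam * y ≤ 2 * y := by nlinarith
    have h2 : 0 ≤ lam * y := mul_nonneg hl0.le hy0
    exact ⟨by linarith, by linarith, by linarith, by linarith⟩
  have hmono : StrictMonoOn g (Set.Ico (0 : ℝ) (1 / 2)) := by
    apply strictMonoOn_of_deriv_pos (convex_Ico _ _)
    · have c1 : ContinuousOn (fun y : ℝ => Real.log (1 + 2 * y)) (Set.Ico (0:ℝ) (1/2)) :=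
        ContinuousOn.log (Continuous.continuousOn (by continuity)) (fun y hy => (hpos y hy).1.ne')
      have c2 : ContinuousOn (fun y : ℝ => Real.log (1 - 2 * y)) (Set.Ico (0:ℝ) (1/2)) :=
        ContinuousOn.log (Continuous.continuousOn (by continuity)) (fun y hy => (hpos y hy).2.1.ne')
      have c3 : ContinuousOn (fun y : ℝ => Real.log (1 + lam * y)) (Set.Ico (0:ℝ) (1/2)) :=
        ContinuousOn.log (Continuous.continuousOn (by continuity)) (fun y hy => (hpos y hy).2.2.1.ne')
      have c4 : ContinuousOn (fun y : ℝ => Real.log (1 - lam * y)) (Set.Ico (0:ℝ) (1/2)) :=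
        ContinuousOn.log (Continuous.continuousOn (by continuity)) (fun y hy => (hpos y hy).2.2.2.ne')
      exact (continuousOn_const.mul (c1.sub c2)).sub (c3.sub c4)
    · intro x hx
      rw [interior_Ico] at hx
      obtain ⟨hx0, hxh⟩ := hx
      obtain ⟨ha, hb, hc, hd⟩ := hpos x ⟨hx0.le, hxh⟩
      have d1 : HasDerivAt (fun y : ℝ => 1 + 2 * y) 2 x := by
        simpa using ((hasDerivAt_id x).const_mul 2).const_add 1
      have d2 : HasDerivAt (fun y : ℝ => 1 - 2 * y) (-2) x := by
        simpa using ((hasDerivAt_id x).const_mul 2).const_sub 1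
      have d3 : HasDerivAt (fun y : ℝ => 1 + lam * y) lam x := by
        simpa using ((hasDerivAt_id x).const_mul lam).const_add 1
      have d4 : HasDerivAt (fun y : ℝ => 1 - lam * y) (-lam) x := by
        simpa using ((hasDerivAt_id x).const_mul lam).const_sub 1
      have l1 := d1.log ha.ne'
      have l2 := d2.log hb.ne'
      have l3 := d3.log hc.ne'
      have l4 := d4.log hd.ne'
      have hder : HasDerivAt g
          ((lam / 2) * (2 / (1 + 2 * x) - (-2) / (1 - 2 * x))
            - (lam / (1 + lam * x) - (-lam) / (1 - lam * x))) x :=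
        ((l1.sub l2).const_mul (lam / 2)).sub (l3.sub l4)
      rw [hder.deriv]
      have heq : (lam / 2) * (2 / (1 + 2 * x) - (-2) / (1 - 2 * x))
            - (lam / (1 + lam * x) - (-lam) / (1 - lam * x))
          = 2 * lam * x ^ 2 * (4 - lam ^ 2)
              / (((1 + 2 * x) * (1 - 2 * x)) * ((1 + lam * x) * (1 - lam * x))) := by
        field_simp
        ring
      rw [heq]
      have h4l : 0 < 4 - lam ^ 2 := by nlinarith
      positivity
  intro x hx0 hx
  obtain ⟨ha, hb, hc, hd⟩ := hpos x ⟨hx0, hx⟩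
  have h0 : g 0 = 0 := by simp [hgdef]
  rw [Real.log_div hc.ne' hd.ne', Real.log_div ha.ne' hb.ne']
  rcases eq_or_lt_of_le hx0 with h | h
  · subst h
    norm_num
  · have hgx : 0 < g x := by
      have := hmono ⟨le_refl 0, by norm_num⟩ ⟨hx0, hx⟩ h
      rwa [h0] at this
    have hlt : Real.log (1 + lam * x) - Real.log (1 - lam * x)
        < lam / 2 * (Real.log (1 + 2 * x) - Real.log (1 - 2 * x)) := by
      simp only [hgdef] at hgx
      linarith
    refine ⟨hlt.le, ?_⟩
    constructor
    · intro he; exact absurd he hlt.ne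
    · intro he; exact absurd he h.ne'
end

section
/- Fix β > 0 and λ_q = (e^{2β}−1)/(1+(1/q)(e^{2β}−1)). For each x ∈ (0, 1/(q(q−1))], the function q ↦ φ̄(q,λ_q)(x) = log((1+λ_q x)/(1−λ_q(q−1)x)) / log((1+qx)/(1−q(q−1)x)) is strictly decreasing in the real parameter q ≥ 2 (where defined). -/
open Real Set

namespace S14

noncomputable def hh (q z : ℝ) : ℝ := Real.log (1 + q*z) - Real.log (1 - q*(q-1)*z)
noncomputable def AA (q z : ℝ) : ℝ := z/(1+q*z) + (2*q-1)*z/(1-q*(q-1)*z)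
noncomputable def Ad (q z : ℝ) : ℝ := 1/(1+q*z)^2 + (2*q-1)/(1-q*(q-1)*z)^2
noncomputable def Bd (q z : ℝ) : ℝ := q/(1+q*z) + q*(q-1)/(1-q*(q-1)*z)

lemma u_pos {q z : ℝ} (hq : 2 ≤ q) (hz : 0 ≤ z) : 0 < 1 + q*z := by nlinarith

lemma hh_pos {q z : ℝ} (hq : 2 ≤ q) (hz : 0 < z) (hv : 0 < 1 - q*(q-1)*z) :
    0 < hh q z := by
  have h1 : 0 < Real.log (1+q*z) := Real.log_pos (by nlinarith)
  have hc : 0 < q*(q-1)*z := by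
    have : (0:ℝ) < q*(q-1) := by nlinarith
    exact mul_pos this hz
  have h2 : Real.log (1 - q*(q-1)*z) < 0 := Real.log_neg hv (by linarith)
  unfold hh; linarith

lemma hasDerivAt_hh_z (q : ℝ) {z : ℝ} (hu : 0 < 1 + q*z) (hv : 0 < 1 - q*(q-1)*z) :
    HasDerivAt (fun z => hh q z) (Bd q z) z := by
  have h1 : HasDerivAt (fun z : ℝ => 1 + q*z) q z := by
    simpa using ((hasDerivAt_id z).const_mul q).const_add 1
  have h2 : HasDerivAt (fun z : ℝ => 1 - q*(q-1)*z) (-(q*(q-1))) z := by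
    simpa using ((hasDerivAt_id z).const_mul (q*(q-1))).const_sub 1
  have := (h1.log hu.ne').sub (h2.log hv.ne')
  refine this.congr_deriv ?_
  unfold Bd; field_simp; ring

lemma hasDerivAt_hh_q (z : ℝ) {q : ℝ} (hu : 0 < 1 + q*z) (hv : 0 < 1 - q*(q-1)*z) :
    HasDerivAt (fun q => hh q z) (AA q z) q := by
  have h1 : HasDerivAt (fun q : ℝ => 1 + q*z) z q := by
    simpa using ((hasDerivAt_id q).mul_const z).const_add 1
  have h2 : HasDerivAt (fun q : ℝ => 1 - q*(q-1)*z) (-((2*q-1)*z)) q := by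
    have : HasDerivAt (fun q : ℝ => q*(q-1)) (1*(q-1) + q*1) q :=
      (hasDerivAt_id q).mul ((hasDerivAt_id q).sub_const 1)
    have := (this.mul_const z).const_sub 1
    exact this.congr_deriv (by ring)
  have := (h1.log hu.ne').sub (h2.log hv.ne')
  refine this.congr_deriv ?_
  unfold AA; field_simp; ring

lemma hasDerivAt_AA (q : ℝ) {z : ℝ} (hu : 0 < 1 + q*z) (hv : 0 < 1 - q*(q-1)*z) :
    HasDerivAt (fun z => AA q z) (Ad q z) z := by
  have h1 : HasDerivAt (fun z : ℝ => 1 + q*z) q z := by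
    simpa using ((hasDerivAt_id z).const_mul q).const_add 1
  have h2 : HasDerivAt (fun z : ℝ => 1 - q*(q-1)*z) (-(q*(q-1))) z := by
    simpa using ((hasDerivAt_id z).const_mul (q*(q-1))).const_sub 1
  have d1 := (hasDerivAt_id z).div h1 hu.ne'
  have d2 := ((hasDerivAt_id z).const_mul (2*q-1)).div h2 hv.ne'
  have := d1.add d2
  refine this.congr_deriv ?_
  unfold Ad; simp only [id]; field_simp; ring

lemma hasDerivAt_Ad (q : ℝ) {z : ℝ} (hu : 0 < 1 + q*z) (hv : 0 < 1 - q*(q-1)*z) :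
    HasDerivAt (fun z => Ad q z)
      (-(2*q)/(1+q*z)^3 + 2*(q*(q-1))*(2*q-1)/(1-q*(q-1)*z)^3) z := by
  have h1 : HasDerivAt (fun z : ℝ => 1 + q*z) q z := by
    simpa using ((hasDerivAt_id z).const_mul q).const_add 1
  have h2 : HasDerivAt (fun z : ℝ => 1 - q*(q-1)*z) (-(q*(q-1))) z := by
    simpa using ((hasDerivAt_id z).const_mul (q*(q-1))).const_sub 1
  have d1 := (hasDerivAt_const z (1:ℝ)).div (h1.pow 2) (pow_ne_zero 2 hu.ne')
  have d2 := (hasDerivAt_const z (2*q-1)).div (h2.pow 2) (pow_ne_zero 2 hv.ne')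
  have := d1.add d2
  refine this.congr_deriv ?_
  norm_num only [Pi.pow_apply]
  field_simp
  ring

lemma hasDerivAt_Bd (q : ℝ) {z : ℝ} (hu : 0 < 1 + q*z) (hv : 0 < 1 - q*(q-1)*z) :
    HasDerivAt (fun z => Bd q z)
      (-(q^2)/(1+q*z)^2 + (q*(q-1))^2/(1-q*(q-1)*z)^2) z := by
  have h1 : HasDerivAt (fun z : ℝ => 1 + q*z) q z := by
    simpa using ((hasDerivAt_id z).const_mul q).const_add 1
  have h2 : HasDerivAt (fun z : ℝ => 1 - q*(q-1)*z) (-(q*(q-1))) z := by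
    simpa using ((hasDerivAt_id z).const_mul (q*(q-1))).const_sub 1
  have d1 := (hasDerivAt_const z q).div h1 hu.ne'
  have d2 := (hasDerivAt_const z (q*(q-1))).div h2 hv.ne'
  have := d1.add d2
  refine this.congr_deriv ?_
  field_simp
  ring

lemma Bd_pos {q z : ℝ} (hq : 2 ≤ q) (hz : 0 ≤ z) (hv : 0 < 1 - q*(q-1)*z) :
    0 < Bd q z := by
  have hu := u_pos hq hz
  have h1 : 0 < q/(1+q*z) := div_pos (by linarith) hu
  have h2 : 0 < q*(q-1)/(1-q*(q-1)*z) := div_pos (by nlinarith) hv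
  unfold Bd; linarith

lemma hv_mono {q z Z : ℝ} (hq : 2 ≤ q) (hzZ : z ≤ Z) (hvZ : 0 < 1 - q*(q-1)*Z) :
    0 < 1 - q*(q-1)*z := by
  have hc : 0 ≤ q*(q-1) := by nlinarith
  nlinarith [mul_le_mul_of_nonneg_left hzZ hc]

lemma key_ineq {q z : ℝ} (hq : 2 ≤ q) (hz : 0 ≤ z) (hv : 0 < 1 - q*(q-1)*z) :
    0 ≤ (-(2*q)/(1+q*z)^3 + 2*(q*(q-1))*(2*q-1)/(1-q*(q-1)*z)^3) * Bd q z
      - Ad q z * (-(q^2)/(1+q*z)^2 + (q*(q-1))^2/(1-q*(q-1)*z)^2) := by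
  have hu := u_pos hq hz
  set u := 1 + q*z with hu_def
  set v := 1 - q*(q-1)*z with hv_def
  have hu1 : 1 ≤ u := by have : 0 ≤ q*z := by nlinarith
                         simp [hu_def]; linarith
  have hv1 : v ≤ 1 := by have : 0 ≤ q*(q-1)*z := by nlinarith
                         simp [hv_def]; linarith
  have hid : (-(2*q)/u^3 + 2*(q*(q-1))*(2*q-1)/v^3) * Bd q z
      - Ad q z * (-(q^2)/u^2 + (q*(q-1))^2/v^2)
      = (q*(q-1)*u + q*v)^2 * ((2*q-1)*u^2 - v^2) / (u^4 * v^4) := by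
    unfold Bd Ad
    rw [← hu_def, ← hv_def]
    field_simp
    ring
  rw [hid]
  have h2 : 0 < (2*q-1)*u^2 - v^2 := by nlinarith
  positivity

lemma rho_mono {q Z : ℝ} (hq : 2 ≤ q) (hvZ : 0 < 1 - q*(q-1)*Z) :
    MonotoneOn (fun z => Ad q z / Bd q z) (Icc (0:ℝ) Z) := by
  have hd : ∀ z ∈ Icc (0:ℝ) Z, HasDerivAt (fun z => Ad q z / Bd q z)
      (((-(2*q)/(1+q*z)^3 + 2*(q*(q-1))*(2*q-1)/(1-q*(q-1)*z)^3) * Bd q z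
        - Ad q z * (-(q^2)/(1+q*z)^2 + (q*(q-1))^2/(1-q*(q-1)*z)^2)) / (Bd q z)^2) z := by
    intro z hz
    have hv := hv_mono hq hz.2 hvZ
    have hu := u_pos hq hz.1
    exact (hasDerivAt_Ad q hu hv).div (hasDerivAt_Bd q hu hv) (Bd_pos hq hz.1 hv).ne'
  apply monotoneOn_of_deriv_nonneg (convex_Icc 0 Z)
  · exact fun z hz => ((hd z hz).continuousAt).continuousWithinAt
  · intro z hz
    rw [interior_Icc] at hz
    exact ((hd z ⟨le_of_lt hz.1, le_of_lt hz.2⟩).differentiableAt).differentiableWithinAt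
  · intro z hz
    rw [interior_Icc] at hz
    have hz' : z ∈ Icc (0:ℝ) Z := ⟨le_of_lt hz.1, le_of_lt hz.2⟩
    rw [(hd z hz').deriv]
    have hv := hv_mono hq hz'.2 hvZ
    exact div_nonneg (key_ineq hq hz'.1 hv) (sq_nonneg _)

lemma stepD {q Z s z : ℝ} (hq : 2 ≤ q) (hvZ : 0 < 1 - q*(q-1)*Z)
    (hs : s ∈ Icc (0:ℝ) Z) (hz : z ∈ Icc (0:ℝ) Z) (hsz : s ≤ z) :
    Ad q s * Bd q z ≤ Ad q z * Bd q s := by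
  have h := rho_mono hq hvZ hs hz hsz
  have hBs := Bd_pos hq hs.1 (hv_mono hq hs.2 hvZ)
  have hBz := Bd_pos hq hz.1 (hv_mono hq hz.2 hvZ)
  rwa [div_le_div_iff₀ hBs hBz] at h

lemma stepC {q z : ℝ} (hq : 2 ≤ q) (hz : 0 ≤ z) (hv : 0 < 1 - q*(q-1)*z) :
    Bd q z * AA q z ≤ Ad q z * hh q z := by
  set M : ℝ → ℝ := fun s => Ad q z * hh q s - Bd q z * AA q s with hM
  have hd : ∀ s ∈ Icc (0:ℝ) z, HasDerivAt M
      (Ad q z * Bd q s - Bd q z * Ad q s) s := by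
    intro s hs
    have hvs := hv_mono hq hs.2 hv
    have hus := u_pos hq hs.1
    exact ((hasDerivAt_hh_z q hus hvs).const_mul (Ad q z)).sub
      ((hasDerivAt_AA q hus hvs).const_mul (Bd q z))
  have hmono : MonotoneOn M (Icc (0:ℝ) z) := by
    apply monotoneOn_of_deriv_nonneg (convex_Icc 0 z)
    · exact fun s hs => ((hd s hs).continuousAt).continuousWithinAt
    · intro s hs
      rw [interior_Icc] at hs
      exact ((hd s ⟨le_of_lt hs.1, le_of_lt hs.2⟩).differentiableAt).differentiableWithinAt
    · intro s hs
      rw [interior_Icc] at hs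
      have hs' : s ∈ Icc (0:ℝ) z := ⟨le_of_lt hs.1, le_of_lt hs.2⟩
      rw [(hd s hs').deriv]
      have := stepD hq hv hs' (⟨hz, le_refl z⟩ : z ∈ Icc (0:ℝ) z) hs'.2
      linarith
  have h0 : M 0 = 0 := by simp [hM, hh, AA]
  have := hmono (⟨le_refl 0, hz⟩ : (0:ℝ) ∈ Icc (0:ℝ) z) ⟨hz, le_refl z⟩ hz
  rw [h0] at this
  simp only [hM] at this
  linarith

lemma stepB {q z z' : ℝ} (hq : 2 ≤ q) (hz : 0 < z) (hzz : z ≤ z')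
    (hv' : 0 < 1 - q*(q-1)*z') :
    AA q z / hh q z ≤ AA q z' / hh q z' := by
  have hd : ∀ w ∈ Icc z z', HasDerivAt (fun w => AA q w / hh q w)
      ((Ad q w * hh q w - AA q w * Bd q w) / (hh q w)^2) w := by
    intro w hw
    have hw0 : 0 < w := lt_of_lt_of_le hz hw.1
    have hvw := hv_mono hq hw.2 hv'
    have huw := u_pos hq hw0.le
    exact (hasDerivAt_AA q huw hvw).div (hasDerivAt_hh_z q huw hvw)
      (hh_pos hq hw0 hvw).ne'
  have hmono : MonotoneOn (fun w => AA q w / hh q w) (Icc z z') := by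
    apply monotoneOn_of_deriv_nonneg (convex_Icc z z')
    · exact fun w hw => ((hd w hw).continuousAt).continuousWithinAt
    · intro w hw
      rw [interior_Icc] at hw
      exact ((hd w ⟨le_of_lt hw.1, le_of_lt hw.2⟩).differentiableAt).differentiableWithinAt
    · intro w hw
      rw [interior_Icc] at hw
      have hw' : w ∈ Icc z z' := ⟨le_of_lt hw.1, le_of_lt hw.2⟩
      rw [(hd w hw').deriv]
      have hw0 : 0 < w := lt_of_lt_of_le hz hw'.1
      have hvw := hv_mono hq hw'.2 hv'
      have := stepC hq hw0.le hvw
      apply div_nonneg _ (sq_nonneg _)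
      linarith
  exact hmono ⟨le_refl z, hzz⟩ ⟨hzz, le_refl z'⟩ hzz

lemma qq_mono {q q₂ : ℝ} (hq : 2 ≤ q) (h : q ≤ q₂) : q*(q-1) ≤ q₂*(q₂-1) := by
  nlinarith

lemma stepA {q₁ q₂ z z' : ℝ} (hq₁ : 2 ≤ q₁) (h12 : q₁ ≤ q₂) (hz : 0 < z)
    (hzz : z ≤ z') (hv : 0 < 1 - q₂*(q₂-1)*z') :
    hh q₁ z' * hh q₂ z ≤ hh q₂ z' * hh q₁ z := by
  have hzpos : 0 < z' := lt_of_lt_of_le hz hzz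
  have facts : ∀ q ∈ Icc q₁ q₂, 2 ≤ q ∧ 0 < 1 - q*(q-1)*z' ∧ 0 < 1 - q*(q-1)*z := by
    intro q hq
    have h2q : 2 ≤ q := le_trans hq₁ hq.1
    have hqv' : 0 < 1 - q*(q-1)*z' := by
      have := qq_mono h2q hq.2
      nlinarith [mul_le_mul_of_nonneg_right this hzpos.le]
    exact ⟨h2q, hqv', hv_mono h2q hzz hqv'⟩
  have hd : ∀ q ∈ Icc q₁ q₂, HasDerivAt (fun q => Real.log (hh q z') - Real.log (hh q z))
      (AA q z' / hh q z' - AA q z / hh q z) q := by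
    intro q hq
    obtain ⟨h2q, hqv', hqv⟩ := facts q hq
    have h1 := (hasDerivAt_hh_q z' (u_pos h2q hzpos.le) hqv').log
      (hh_pos h2q hzpos hqv').ne'
    have h2 := (hasDerivAt_hh_q z (u_pos h2q hz.le) hqv).log (hh_pos h2q hz hqv).ne'
    exact h1.sub h2
  have hmono : MonotoneOn (fun q => Real.log (hh q z') - Real.log (hh q z)) (Icc q₁ q₂) := by
    apply monotoneOn_of_deriv_nonneg (convex_Icc q₁ q₂)
    · exact fun q hq => ((hd q hq).continuousAt).continuousWithinAt
    · intro q hq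
      rw [interior_Icc] at hq
      exact ((hd q ⟨le_of_lt hq.1, le_of_lt hq.2⟩).differentiableAt).differentiableWithinAt
    · intro q hq
      rw [interior_Icc] at hq
      have hq' : q ∈ Icc q₁ q₂ := ⟨le_of_lt hq.1, le_of_lt hq.2⟩
      rw [(hd q hq').deriv]
      obtain ⟨h2q, hqv', hqv⟩ := facts q hq'
      have := stepB h2q hz hzz hqv'
      linarith
  have hle := hmono (⟨le_refl q₁, h12⟩ : q₁ ∈ Icc q₁ q₂) ⟨h12, le_refl q₂⟩ h12
  simp only at hle
  obtain ⟨_, h1v', h1v⟩ := facts q₁ ⟨le_refl q₁, h12⟩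
  obtain ⟨h2q₂, h2v', h2v⟩ := facts q₂ ⟨h12, le_refl q₂⟩
  have p1' := hh_pos hq₁ hzpos h1v'
  have p1 := hh_pos hq₁ hz h1v
  have p2' := hh_pos h2q₂ hzpos h2v'
  have p2 := hh_pos h2q₂ hz h2v
  have : Real.log (hh q₁ z' * hh q₂ z) ≤ Real.log (hh q₂ z' * hh q₁ z) := by
    rw [Real.log_mul p1'.ne' p2.ne', Real.log_mul p2'.ne' p1.ne']
    linarith
  exact (Real.log_le_log_iff (mul_pos p1' p2) (mul_pos p2' p1)).mp this

lemma log_ratio_eq {b q x : ℝ} (hb : 0 < b) (hq : 2 ≤ q) (hx : 0 < x)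
    (hv : 0 < 1 - q*(q-1)*x) :
    Real.log ((1 + b/(1+(1/q)*b)*x) / (1 - b/(1+(1/q)*b)*(q-1)*x))
      = hh q ((b/(q+b))*x) := by
  have hq0 : (0:ℝ) < q := by linarith
  have hqb : 0 < q + b := by linarith
  have hL : b/(1+(1/q)*b) = q*(b/(q+b)) := by
    field_simp
  have ht1 : b/(q+b) < 1 := (div_lt_one hqb).mpr (by linarith)
  have ht0 : 0 < b/(q+b) := div_pos hb hqb
  have htx : (b/(q+b))*x ≤ x := by nlinarith
  have htx0 : 0 ≤ (b/(q+b))*x := by positivity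
  have h1 : 0 < 1 + q*((b/(q+b))*x) := u_pos hq htx0
  have h2 : 0 < 1 - q*(q-1)*((b/(q+b))*x) := hv_mono hq htx hv
  have e1 : 1 + b/(1+(1/q)*b)*x = 1 + q*((b/(q+b))*x) := by rw [hL]; ring
  have e2 : 1 - b/(1+(1/q)*b)*(q-1)*x = 1 - q*(q-1)*((b/(q+b))*x) := by rw [hL]; ring
  rw [e1, e2, Real.log_div h1.ne' h2.ne']
  rfl

lemma log_ratio_eq' {q x : ℝ} (hq : 2 ≤ q) (hx : 0 ≤ x) (hv : 0 < 1 - q*(q-1)*x) :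
    Real.log ((1 + q*x) / (1 - q*(q-1)*x)) = hh q x := by
  rw [Real.log_div (u_pos hq hx).ne' hv.ne']
  rfl

end S14

/-- For fixed β > 0 and x > 0 in the common domain, the map
q ↦ φ̄(q,λ_q)(x) = log((1+λ_q x)/(1-λ_q(q-1)x)) / log((1+qx)/(1-q(q-1)x)),
with λ_q = (e^{2β}-1)/(1+(1/q)(e^{2β}-1)), is strictly decreasing in the real
parameter q ≥ 2. -/
theorem stmt14 (β : ℝ) (hβ : 0 < β) (q₁ q₂ : ℝ) (hq₁ : 2 ≤ q₁) (h12 : q₁ < q₂)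
    (x : ℝ) (hx0 : 0 < x) (hx : x ≤ 1 / (q₂ * (q₂ - 1))) :
    Real.log ((1 + ((Real.exp (2 * β) - 1) / (1 + (1 / q₂) * (Real.exp (2 * β) - 1))) * x) /
        (1 - ((Real.exp (2 * β) - 1) / (1 + (1 / q₂) * (Real.exp (2 * β) - 1))) * (q₂ - 1) * x)) /
      Real.log ((1 + q₂ * x) / (1 - q₂ * (q₂ - 1) * x))
    <
    Real.log ((1 + ((Real.exp (2 * β) - 1) / (1 + (1 / q₁) * (Real.exp (2 * β) - 1))) * x) /
        (1 - ((Real.exp (2 * β) - 1) / (1 + (1 / q₁) * (Real.exp (2 * β) - 1))) * (q₁ - 1) * x)) /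
      Real.log ((1 + q₁ * x) / (1 - q₁ * (q₁ - 1) * x)) := by
  open S14 in
  set b : ℝ := Real.exp (2 * β) - 1 with hbdef
  have hb : 0 < b := by
    have : Real.exp 0 < Real.exp (2*β) := Real.exp_lt_exp.mpr (by linarith)
    rw [Real.exp_zero] at this
    simp only [hbdef]
    linarith
  clear_value b
  have hq₂ : 2 ≤ q₂ := by linarith
  have hq₂0 : (0:ℝ) < q₂*(q₂-1) := by nlinarith
  have hxle : q₂*(q₂-1)*x ≤ 1 := by
    rw [le_div_iff₀ hq₂0] at hx
    linarith
  have hqqlt : q₁*(q₁-1) < q₂*(q₂-1) := by nlinarith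
  have hv₁ : 0 < 1 - q₁*(q₁-1)*x := by nlinarith
  -- facts about L₁ for the boundary case
  have hden₁ : 0 < 1 + (1/q₁)*b := by
    have : 0 < 1/q₁ := by positivity
    nlinarith
  have hL₁pos : 0 < b/(1+(1/q₁)*b) := div_pos hb hden₁
  have hL₁lt : b/(1+(1/q₁)*b) < q₁ := by
    rw [div_lt_iff₀ hden₁]
    have hq₁0 : q₁ ≠ 0 := by positivity
    have : q₁*(1+(1/q₁)*b) = q₁ + b := by field_simp
    rw [this]
    linarith
  rcases eq_or_lt_of_le hxle with hcase | hcase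
  · -- boundary case q₂(q₂-1)x = 1 : LHS is 0
    have hz : 1 - q₂*(q₂-1)*x = 0 := by linarith
    rw [hz, div_zero, Real.log_zero, div_zero]
    apply div_pos
    · apply Real.log_pos
      have hvL : 0 < 1 - b/(1+(1/q₁)*b)*(q₁-1)*x := by
        have hpos : 0 < (q₁-1)*x := by nlinarith
        have h1 := mul_lt_mul_of_pos_right hL₁lt hpos
        nlinarith
      rw [lt_div_iff₀ hvL]
      have e1 : 0 < b/(1+(1/q₁)*b)*x := mul_pos hL₁pos hx0
      have e2 : 0 < b/(1+(1/q₁)*b)*((q₁-1)*x) :=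
        mul_pos hL₁pos (by nlinarith)
      nlinarith
    · apply Real.log_pos
      rw [lt_div_iff₀ hv₁]
      nlinarith
  · -- main case
    have hv₂ : 0 < 1 - q₂*(q₂-1)*x := by linarith
    set t₁ : ℝ := b/(q₁+b) with ht₁def
    set t₂ : ℝ := b/(q₂+b) with ht₂def
    have hqb₁ : 0 < q₁ + b := by linarith
    have hqb₂ : 0 < q₂ + b := by linarith
    have ht21 : t₂ < t₁ := div_lt_div_of_pos_left hb hqb₁ (by linarith)
    have ht₂0 : 0 < t₂ := div_pos hb hqb₂
    have ht₁1 : t₁ < 1 := (div_lt_one hqb₁).mpr (by linarith)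
    have ht₁0 : 0 < t₁ := div_pos hb hqb₁
    clear_value t₁ t₂
    have hx21 : t₂*x < t₁*x := by nlinarith
    have hx20 : 0 < t₂*x := by positivity
    have hx11 : t₁*x < x := by nlinarith
    have hv₂t₁ : 0 < 1 - q₂*(q₂-1)*(t₁*x) := hv_mono hq₂ hx11.le hv₂
    have hv₂t₂ : 0 < 1 - q₂*(q₂-1)*(t₂*x) := hv_mono hq₂ (by linarith) hv₂
    rw [log_ratio_eq hb hq₂ hx0 hv₂, log_ratio_eq hb hq₁ hx0 hv₁,
        log_ratio_eq' hq₂ hx0.le hv₂, log_ratio_eq' hq₁ hx0.le hv₁, ← ht₁def, ← ht₂def]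
    have hden2 : 0 < hh q₂ x := hh_pos hq₂ hx0 hv₂
    have hden1 : 0 < hh q₁ x := hh_pos hq₁ hx0 hv₁
    have step1 : hh q₂ (t₂*x) / hh q₂ x < hh q₂ (t₁*x) / hh q₂ x := by
      have hnum : hh q₂ (t₂*x) < hh q₂ (t₁*x) := by
        have hq₂0' : (0:ℝ) < q₂ := by linarith
        have hm1 : q₂*(t₂*x) < q₂*(t₁*x) := mul_lt_mul_of_pos_left hx21 hq₂0'
        have hm2 : q₂*(q₂-1)*(t₂*x) < q₂*(q₂-1)*(t₁*x) := mul_lt_mul_of_pos_left hx21 hq₂0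
        have ha : Real.log (1+q₂*(t₂*x)) < Real.log (1+q₂*(t₁*x)) :=
          Real.log_lt_log (u_pos hq₂ hx20.le) (by linarith)
        have hbb : Real.log (1-q₂*(q₂-1)*(t₁*x)) < Real.log (1-q₂*(q₂-1)*(t₂*x)) :=
          Real.log_lt_log hv₂t₁ (by linarith)
        unfold hh
        linarith
      exact div_lt_div_of_pos_right hnum hden2
    have step2 : hh q₂ (t₁*x) / hh q₂ x ≤ hh q₁ (t₁*x) / hh q₁ x := by
      rw [div_le_div_iff₀ hden2 hden1]
      have := stepA (q₁:=q₁) (q₂:=q₂) (z:=t₁*x) (z':=x) hq₁ h12.le (by positivity : 0 < t₁*x) hx11.le hv₂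
      linarith
    calc hh q₂ (t₂*x) / hh q₂ x < hh q₂ (t₁*x) / hh q₂ x := step1
      _ ≤ hh q₁ (t₁*x) / hh q₁ x := step2
end
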